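/- Let g_ε(θ) = (1 + e^{iθ})/2 + iε(e^{iθ} - 1)². There exist θ₀ > 0 and bounded functions such that for all |θ| ≤ θ₀ and all |ε| < 1, |g_ε(θ)|² ≤ 1 - θ²/8; in particular |g_ε(θ)| ≤ 1 with equality on [-θ₀, θ₀] if and only if θ = 0. -/

import Mathlib

noncomputable def gE (ε θ : ℝ) : ℂ :=
  (1 + Complex.exp (θ * Complex.I)) / 2 + Complex.I * ε * (Complex.exp (θ * Complex.I) - 1) ^ 2

lemma gE_normSq (ε θ : ℝ) :
    ‖gE ε θ‖ ^ 2 =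
      (1 + Real.cos θ) / 2 + 2 * ε * Real.sin θ * (1 - Real.cos θ)
        + 4 * ε ^ 2 * (1 - Real.cos θ) ^ 2 := by
  have h : (Complex.exp (θ * Complex.I)) = Complex.mk (Real.cos θ) (Real.sin θ) := by
    rw [Complex.exp_mul_I]
    apply Complex.ext <;> simp [Complex.cos_ofReal_re, Complex.sin_ofReal_re]
  rw [Complex.sq_norm, gE, h]
  have hsc := Real.sin_sq_add_cos_sq θ
  simp only [pow_two, Complex.normSq_apply, Complex.add_re, Complex.add_im, Complex.mul_re,
    Complex.mul_im, Complex.sub_re, Complex.sub_im, Complex.div_re, Complex.div_im,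
    Complex.one_re, Complex.one_im, Complex.I_re, Complex.I_im, Complex.ofReal_re,
    Complex.ofReal_im, Complex.re_ofNat, Complex.im_ofNat, Complex.normSq_apply]
  linear_combination (Real.sin θ ^ 2 * ε ^ 2 - Real.sin θ * ε + Real.cos θ ^ 2 * ε ^ 2
    - 4 * Real.cos θ * ε ^ 2 + 3 * ε ^ 2 + 1 / 4) * hsc

/-- Pure arithmetic core of the estimate. -/
lemma gE_arith (t u s e : ℝ) (ht0 : 0 ≤ t) (ht : t ≤ 1 / 20) (hu0 : 0 ≤ u)
    (hu1 : u ≤ t ^ 2 / 2) (hul : 49 / 100 * t ^ 2 ≤ u) (hs : |s| ≤ t) (he : |e| < 1) :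
    1 - u / 2 + 2 * e * s * u + 4 * e ^ 2 * u ^ 2 ≤ 1 - t ^ 2 / 8 := by
  have hcross : 2 * e * s * u ≤ 2 * t * u := by
    have h1 : e * s ≤ t := by
      calc e * s ≤ |e * s| := le_abs_self _
        _ = |e| * |s| := abs_mul _ _
        _ ≤ 1 * t := mul_le_mul he.le hs (abs_nonneg _) zero_le_one
        _ = t := one_mul t
    nlinarith
  have he2 : 4 * e ^ 2 * u ^ 2 ≤ 4 * u ^ 2 := by
    have h := abs_le.mp he.le
    have he1 : e ^ 2 ≤ 1 := by nlinarith [h.1, h.2]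
    nlinarith [mul_le_mul_of_nonneg_right he1 (sq_nonneg u)]
  have hu' : u ≤ 1 / 800 := by nlinarith
  have hfac : 39 / 100 ≤ 1 / 2 - 2 * t - 4 * u := by linarith
  have key : t ^ 2 / 8 ≤ u / 2 - 2 * t * u - 4 * u ^ 2 := by
    nlinarith [mul_le_mul hul hfac (by norm_num) hu0]
  linarith

/-- Lower bound for `1 - cos θ` near `0`. -/
lemma one_sub_cos_lower (θ : ℝ) (hθ : |θ| ≤ 1 / 20) :
    49 / 100 * |θ| ^ 2 ≤ 1 - Real.cos θ := by
  have ht0 : 0 ≤ |θ| := abs_nonneg θ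
  rcases eq_or_lt_of_le ht0 with h0 | hpos
  · rw [← h0]
    simpa using sub_nonneg.mpr (Real.cos_le_one θ)
  · have hs : |θ| / 2 - (|θ| / 2) ^ 3 / 4 < Real.sin (|θ| / 2) :=
      by have := Real.sin_gt_sub_cube (x := |θ| / 2) (by linarith); nlinarith [pow_pos (by linarith : (0:ℝ) < |θ| / 2) 3]
    have hcos : 1 - Real.cos θ = 2 * Real.sin (|θ| / 2) ^ 2 := by
      have h1 : Real.sin (|θ| / 2) ^ 2 = 1 / 2 - Real.cos (2 * (|θ| / 2)) / 2 :=
        Real.sin_sq_eq_half_sub (|θ| / 2)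
      have h2 : Real.cos |θ| = Real.cos θ := Real.cos_abs θ
      rw [← h2, h1]; ring_nf
    have hx2 : (|θ| / 2) ^ 2 ≤ 1 / 1600 := by nlinarith
    have hx3 : (|θ| / 2) ^ 3 ≤ (|θ| / 2) / 1600 := by
      nlinarith [mul_le_mul_of_nonneg_left hx2 (by linarith : (0:ℝ) ≤ |θ| / 2)]
    have hnn : 0 ≤ |θ| / 2 - (|θ| / 2) ^ 3 / 4 := by linarith
    have hsq : (|θ| / 2 - (|θ| / 2) ^ 3 / 4) ^ 2 ≤ Real.sin (|θ| / 2) ^ 2 := by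
      nlinarith [hs.le, Real.sin_nonneg_of_nonneg_of_le_pi (x := |θ| / 2) (by linarith)
        (by nlinarith [Real.pi_gt_three])]
    rw [hcos]
    have htt : |θ| ^ 2 ≤ 1 / 400 := by nlinarith
    have ht4 : |θ| ^ 4 ≤ |θ| ^ 2 / 400 := by
      nlinarith [mul_le_mul_of_nonneg_left htt (sq_nonneg |θ|)]
    nlinarith [hsq, ht4, pow_nonneg ht0 6]

lemma gE_sq_le (θ : ℝ) (hθ : |θ| ≤ 1 / 20) (ε : ℝ) (hε : |ε| < 1) :
    ‖gE ε θ‖ ^ 2 ≤ 1 - θ ^ 2 / 8 := by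
  rw [gE_normSq]
  have hu1 : 1 - Real.cos θ ≤ |θ| ^ 2 / 2 := by
    have := Real.one_sub_sq_div_two_le_cos (x := θ)
    rw [sq_abs]; linarith
  have hmain := gE_arith (|θ|) (1 - Real.cos θ) (Real.sin θ) ε (abs_nonneg θ) hθ
    (by linarith [Real.cos_le_one θ]) hu1 (one_sub_cos_lower θ hθ) Real.abs_sin_le_abs hε
  rw [sq_abs] at hmain
  linarith

theorem gE_local_estimate :
    ∃ θ₀ > (0:ℝ), ∀ θ : ℝ, |θ| ≤ θ₀ → ∀ ε : ℝ, |ε| < 1 →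
      ‖gE ε θ‖ ^ 2 ≤ 1 - θ ^ 2 / 8 ∧
      ‖gE ε θ‖ ≤ 1 ∧
      (‖gE ε θ‖ = 1 ↔ θ = 0) := by
  refine ⟨1 / 20, by norm_num, fun θ hθ ε hε => ?_⟩
  have h1 := gE_sq_le θ hθ ε hε
  have habs : 0 ≤ ‖gE ε θ‖ := norm_nonneg _
  have hle1 : ‖gE ε θ‖ ≤ 1 := by nlinarith [sq_nonneg θ]
  refine ⟨h1, hle1, ?_, ?_⟩
  · intro h
    by_contra hne
    have : 0 < θ ^ 2 := by positivity
    rw [h] at h1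
    nlinarith
  · rintro rfl
    simp [gE]
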